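/- Let n ≥ 1 and let z₁,…,zₙ be real numbers, all ≠ 1. Set aᵢ = 1 + 2zᵢ/(zᵢ−1)², let σₖ be the k-th elementary symmetric polynomial of a₁,…,aₙ (σ₀ = 1), and ρₖ = σₖ / C(n,k). For 0 ≤ l ≤ ⌊n/2⌋ define d_l = 4 · Σ_{k=l}^{⌊n/2⌋} 2^{−2k} · (n! / ((n−2k)! (k−l)! (k+l)!)) · Σ_{m=0}^{2k} (−1)^m C(2k, m) ρ_{n−m}. Then for every real φ, T(φ) = d₀/2 + Σ_{l=1}^{⌊n/2⌋} d_l · cos(2lφ). In particular, if Σ_{m=0}^{2k} (−1)^m C(2k, m) ρ_{n−m} ≥ 0 for every 0 ≤ k ≤ ⌊n/2⌋, then every coefficient d_l is nonnegative. -/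

import Mathlib

/-- `ψ_{z₀}(z) = |z - z₀|² / |1 - z₀|²`. -/
noncomputable def psi (z₀ z : ℂ) : ℝ :=
  ‖z - z₀‖ ^ 2 / ‖1 - z₀‖ ^ 2

/-- `T(φ) = ∏ᵢ ψ_{zᵢ}(e^{iφ}) + ∏ᵢ ψ_{zᵢ}(-e^{iφ})` for real roots `zᵢ`. -/
noncomputable def T {n : ℕ} (z : Fin n → ℝ) (φ : ℝ) : ℝ :=
  (∏ i, psi (z i) (Complex.exp (φ * Complex.I))) +
    (∏ i, psi (z i) (-Complex.exp (φ * Complex.I)))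

lemma psi_exp (x : ℝ) (hx : x ≠ 1) (φ : ℝ) :
    psi x (Complex.exp (φ * Complex.I)) =
      (1 + 2*x/(x-1)^2) - (2*x/(x-1)^2) * Real.cos φ := by
  have hx1 : (x - 1) ≠ 0 := sub_ne_zero.2 hx
  unfold psi
  rw [Complex.sq_norm, Complex.sq_norm, Complex.normSq_apply, Complex.normSq_apply]
  simp only [Complex.sub_re, Complex.sub_im, Complex.exp_ofReal_mul_I_re,
    Complex.exp_ofReal_mul_I_im, Complex.one_re, Complex.one_im, Complex.ofReal_re,
    Complex.ofReal_im, sub_zero]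
  have hx2 : (1:ℝ) - x ≠ 0 := fun h => hx (by linarith)
  have hs : Real.sin φ ^ 2 = 1 - Real.cos φ ^ 2 := Real.sin_sq φ
  field_simp
  nlinarith [hs]

lemma psi_neg_exp (x : ℝ) (hx : x ≠ 1) (φ : ℝ) :
    psi x (-Complex.exp (φ * Complex.I)) =
      (1 + 2*x/(x-1)^2) + (2*x/(x-1)^2) * Real.cos φ := by
  have hx1 : (x - 1) ≠ 0 := sub_ne_zero.2 hx
  unfold psi
  rw [Complex.sq_norm, Complex.sq_norm, Complex.normSq_apply, Complex.normSq_apply]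
  simp only [Complex.sub_re, Complex.sub_im, Complex.neg_re, Complex.neg_im,
    Complex.exp_ofReal_mul_I_re, Complex.exp_ofReal_mul_I_im, Complex.one_re, Complex.one_im,
    Complex.ofReal_re, Complex.ofReal_im, sub_zero]
  have hx2 : (1:ℝ) - x ≠ 0 := fun h => hx (by linarith)
  have hs : Real.sin φ ^ 2 = 1 - Real.cos φ ^ 2 := Real.sin_sq φ
  field_simp
  nlinarith [hs]

open Finset in
lemma even_reindex (N : ℕ) (g : ℕ → ℝ) (h : ∀ j, ¬ Even j → g j = 0) :
    ∑ j ∈ Finset.range (N+1), g j = ∑ k ∈ Finset.range (N/2+1), g (2*k) := by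
  classical
  have h1 : ∑ j ∈ Finset.range (N+1), g j
      = ∑ j ∈ (Finset.range (N+1)).filter (fun j => Even j), g j := by
    rw [Finset.sum_filter_of_ne]
    intro x _ hx
    by_contra ho; exact hx (h x ho)
  have h2 : (Finset.range (N+1)).filter (fun j => Even j)
      = (Finset.range (N/2+1)).image (fun k => 2*k) := by
    ext j
    simp only [mem_filter, mem_range, mem_image, Nat.even_iff]
    constructor
    · rintro ⟨h1, h2⟩; exact ⟨j/2, by omega, by omega⟩
    · rintro ⟨k, hk, rfl⟩; omega
  rw [h1, h2, Finset.sum_image (by intro x _ y _ hxy; beta_reduce at hxy; omega)]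

lemma prod_expand {n : ℕ} (a b : Fin n → ℝ) (c : ℝ) :
    (∏ i, (a i + -(b i * c))) + (∏ i, (a i + b i * c)) =
      2 * ∑ k ∈ Finset.range (n/2+1), c^(2*k) *
        ∑ S ∈ Finset.powersetCard (2*k) (Finset.univ : Finset (Fin n)),
          (∏ i ∈ S, b i) * ∏ i ∈ Finset.univ \ S, a i := by
  classical
  have key : ∀ t : ℝ, (∏ i, (a i + b i * t)) =
      ∑ S ∈ (Finset.univ : Finset (Fin n)).powerset,
        t ^ S.card * ((∏ i ∈ S, b i) * ∏ i ∈ Finset.univ \ S, a i) := by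
    intro t
    rw [show (∏ i, (a i + b i * t)) = ∏ i, (b i * t + a i) by
      exact Finset.prod_congr rfl fun i _ => by ring]
    rw [Finset.prod_add]
    refine Finset.sum_congr rfl fun S _ => ?_
    rw [Finset.prod_mul_distrib, Finset.prod_const]
    ring
  have key' : (∏ i, (a i + -(b i * c))) =
      ∑ S ∈ (Finset.univ : Finset (Fin n)).powerset,
        (-c) ^ S.card * ((∏ i ∈ S, b i) * ∏ i ∈ Finset.univ \ S, a i) := by
    have := key (-c)
    rw [← this]
    exact Finset.prod_congr rfl fun i _ => by ring
  rw [key', key c, ← Finset.sum_add_distrib]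
  have hsplit : ∀ t : ℝ, ∑ S ∈ (Finset.univ : Finset (Fin n)).powerset,
      (((-c) ^ S.card + c ^ S.card) * ((∏ i ∈ S, b i) * ∏ i ∈ Finset.univ \ S, a i)) =
      ∑ j ∈ Finset.range (n+1), ∑ S ∈ Finset.powersetCard j (Finset.univ : Finset (Fin n)),
        (((-c) ^ S.card + c ^ S.card) * ((∏ i ∈ S, b i) * ∏ i ∈ Finset.univ \ S, a i)) := by
    intro t
    rw [Finset.powerset_card_biUnion, Finset.sum_biUnion (by exact (Finset.pairwise_disjoint_powersetCard _).set_pairwise _)]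
    simp [Finset.card_univ]
  calc ∑ S ∈ (Finset.univ : Finset (Fin n)).powerset,
        ((-c) ^ S.card * ((∏ i ∈ S, b i) * ∏ i ∈ Finset.univ \ S, a i)
          + c ^ S.card * ((∏ i ∈ S, b i) * ∏ i ∈ Finset.univ \ S, a i))
      = ∑ j ∈ Finset.range (n+1), ∑ S ∈ Finset.powersetCard j (Finset.univ : Finset (Fin n)),
        (((-c) ^ S.card + c ^ S.card) * ((∏ i ∈ S, b i) * ∏ i ∈ Finset.univ \ S, a i)) := by
        rw [← hsplit c]; exact Finset.sum_congr rfl fun S _ => by ring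
    _ = 2 * ∑ k ∈ Finset.range (n/2+1), c^(2*k) *
        ∑ S ∈ Finset.powersetCard (2*k) (Finset.univ : Finset (Fin n)),
          (∏ i ∈ S, b i) * ∏ i ∈ Finset.univ \ S, a i := by
        have hvan : ∀ j, ¬ Even j →
            (∑ S ∈ Finset.powersetCard j (Finset.univ : Finset (Fin n)),
              (((-c) ^ S.card + c ^ S.card) * ((∏ i ∈ S, b i) * ∏ i ∈ Finset.univ \ S, a i)))
              = 0 := by
          intro j hj
          refine Finset.sum_eq_zero fun S hS => ?_
          have hc : S.card = j := (Finset.mem_powersetCard.1 hS).2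
          rw [hc, Odd.neg_pow (Nat.not_even_iff_odd.1 hj)]
          ring
        have hre := even_reindex n (fun j =>
            ∑ S ∈ Finset.powersetCard j (Finset.univ : Finset (Fin n)),
              (((-c) ^ S.card + c ^ S.card) * ((∏ i ∈ S, b i) * ∏ i ∈ Finset.univ \ S, a i))) hvan
        rw [hre]
        rw [Finset.mul_sum]
        refine Finset.sum_congr rfl fun k _ => ?_
        beta_reduce
        rw [Finset.mul_sum, Finset.mul_sum]
        refine Finset.sum_congr rfl fun S hS => ?_
        have hc : S.card = 2*k := (Finset.mem_powersetCard.1 hS).2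
        rw [hc]
        rw [show (-c) ^ (2*k) = c ^ (2*k) by rw [neg_pow]; simp [pow_mul]]
        ring

lemma sum_compl_prod {n : ℕ} (a : Fin n → ℝ) (m : ℕ) (hm : m ≤ n) :
    ∑ V ∈ Finset.powersetCard m (Finset.univ : Finset (Fin n)), ∏ i ∈ Finset.univ \ V, a i
      = ∑ W ∈ Finset.powersetCard (n - m) (Finset.univ : Finset (Fin n)), ∏ i ∈ W, a i := by
  classical
  refine Finset.sum_nbij' (fun V => Finset.univ \ V) (fun W => Finset.univ \ W) ?_ ?_ ?_ ?_ ?_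
  · intro V hV
    obtain ⟨hsub, hcard⟩ := Finset.mem_powersetCard.1 hV
    refine Finset.mem_powersetCard.2 ⟨Finset.subset_univ _, ?_⟩
    rw [Finset.card_sdiff_of_subset hsub, Finset.card_univ, Fintype.card_fin, hcard]
  · intro W hW
    obtain ⟨hsub, hcard⟩ := Finset.mem_powersetCard.1 hW
    refine Finset.mem_powersetCard.2 ⟨Finset.subset_univ _, ?_⟩
    rw [Finset.card_sdiff_of_subset hsub, Finset.card_univ, Fintype.card_fin, hcard]
    have := Finset.card_le_card hsub
    rw [Finset.card_univ, Fintype.card_fin] at this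
    omega
  · intro V hV
    exact Finset.sdiff_sdiff_eq_self (Finset.subset_univ _)
  · intro W hW
    exact Finset.sdiff_sdiff_eq_self (Finset.subset_univ _)
  · intro V hV; rfl

lemma card_supersets {n : ℕ} (K : ℕ) (V : Finset (Fin n)) (hVK : V.card ≤ K) :
    ((Finset.powersetCard K (Finset.univ : Finset (Fin n))).filter (fun S => V ⊆ S)).card
      = (n - V.card).choose (K - V.card) := by
  classical
  have : ((Finset.powersetCard K (Finset.univ : Finset (Fin n))).filter (fun S => V ⊆ S)).card
      = (Finset.powersetCard (K - V.card) (Finset.univ \ V)).card := by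
    apply Finset.card_bij' (fun S _ => S \ V) (fun W _ => W ∪ V)
    · intro S hS
      obtain ⟨hS1, hS2⟩ := Finset.mem_filter.1 hS
      obtain ⟨_, hcard⟩ := Finset.mem_powersetCard.1 hS1
      refine Finset.mem_powersetCard.2 ⟨?_, ?_⟩
      · intro x hx
        simp only [Finset.mem_sdiff] at hx ⊢
        exact ⟨Finset.mem_univ x, hx.2⟩
      · rw [Finset.card_sdiff_of_subset hS2, hcard]
    · intro W hW
      obtain ⟨hsub, hcard⟩ := Finset.mem_powersetCard.1 hW
      refine Finset.mem_filter.2 ⟨Finset.mem_powersetCard.2 ⟨Finset.subset_univ _, ?_⟩,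
        Finset.subset_union_right⟩
      rw [Finset.card_union_of_disjoint, hcard]
      · omega
      · exact Finset.disjoint_left.2 fun x hx => (Finset.mem_sdiff.1 (hsub hx)).2
    · intro S hS
      obtain ⟨_, hS2⟩ := Finset.mem_filter.1 hS
      exact Finset.sdiff_union_of_subset hS2
    · intro W hW
      obtain ⟨hsub, _⟩ := Finset.mem_powersetCard.1 hW
      rw [Finset.union_sdiff_right]
      exact Finset.sdiff_eq_self_of_disjoint
        (Finset.disjoint_left.2 fun x hx => (Finset.mem_sdiff.1 (hsub hx)).2)
  rw [this, Finset.card_powersetCard, Finset.card_sdiff_of_subset (Finset.subset_univ _),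
    Finset.card_univ, Fintype.card_fin]

lemma card_supersets_zero {n : ℕ} (K : ℕ) (V : Finset (Fin n)) (hVK : K < V.card) :
    ((Finset.powersetCard K (Finset.univ : Finset (Fin n))).filter (fun S => V ⊆ S)).card = 0 := by
  classical
  rw [Finset.card_eq_zero]
  refine Finset.filter_eq_empty_iff.2 fun S hS => ?_
  obtain ⟨_, hcard⟩ := Finset.mem_powersetCard.1 hS
  intro hsub
  have := Finset.card_le_card hsub
  omega

lemma QK {n : ℕ} (a : Fin n → ℝ) (K : ℕ) (hK : K ≤ n) :
    ∑ S ∈ Finset.powersetCard K (Finset.univ : Finset (Fin n)),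
        (∏ i ∈ S, (a i - 1)) * ∏ i ∈ Finset.univ \ S, a i
      = ∑ m ∈ Finset.range (K+1), (-1:ℝ)^m * ((n-m).choose (K-m) : ℝ) *
          ∑ W ∈ Finset.powersetCard (n-m) (Finset.univ : Finset (Fin n)), ∏ i ∈ W, a i := by
  classical
  have step1 : ∀ S : Finset (Fin n),
      (∏ i ∈ S, (a i - 1)) * ∏ i ∈ Finset.univ \ S, a i
        = ∑ V ∈ S.powerset, (-1:ℝ)^V.card * ∏ i ∈ Finset.univ \ V, a i := by
    intro S
    have h1 : (∏ i ∈ S, (a i - 1)) = ∑ V ∈ S.powerset,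
        (-1:ℝ)^V.card * ∏ i ∈ S \ V, a i := by
      have := Finset.prod_add (fun _ : Fin n => (-1:ℝ)) a S
      rw [show (∏ i ∈ S, (a i - 1)) = ∏ i ∈ S, (-1 + a i) by
        exact Finset.prod_congr rfl fun i _ => by ring, this]
      exact Finset.sum_congr rfl fun V _ => by rw [Finset.prod_const]
    rw [h1, Finset.sum_mul]
    refine Finset.sum_congr rfl fun V hV => ?_
    have hVS : V ⊆ S := Finset.mem_powerset.1 hV
    have hdisj : Disjoint (S \ V) (Finset.univ \ S) :=
      Finset.disjoint_left.2 fun x hx => by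
        simp only [Finset.mem_sdiff, Finset.mem_univ, true_and, not_not] at *
        exact hx.1
    have hunion : (S \ V) ∪ (Finset.univ \ S) = Finset.univ \ V := by
      ext x
      simp only [Finset.mem_union, Finset.mem_sdiff, Finset.mem_univ, true_and]
      constructor
      · rintro (⟨h1, h2⟩ | h)
        · exact h2
        · exact fun hx => h (hVS hx)
      · intro h
        by_cases hxS : x ∈ S
        · exact Or.inl ⟨hxS, h⟩
        · exact Or.inr hxS
    rw [mul_assoc, ← Finset.prod_union hdisj, hunion]
  rw [Finset.sum_congr rfl fun S _ => step1 S]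
  have step2 : ∀ S : Finset (Fin n),
      (∑ V ∈ S.powerset, (-1:ℝ)^V.card * ∏ i ∈ Finset.univ \ V, a i)
        = ∑ V ∈ (Finset.univ : Finset (Fin n)).powerset,
            if V ⊆ S then (-1:ℝ)^V.card * ∏ i ∈ Finset.univ \ V, a i else 0 := by
    intro S
    rw [← Finset.sum_filter]
    congr 1
    ext V
    simp [Finset.mem_powerset]
  rw [Finset.sum_congr rfl fun S _ => step2 S, Finset.sum_comm]
  have step3 : ∀ V : Finset (Fin n),
      (∑ S ∈ Finset.powersetCard K (Finset.univ : Finset (Fin n)),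
          if V ⊆ S then (-1:ℝ)^V.card * ∏ i ∈ Finset.univ \ V, a i else 0)
        = (((Finset.powersetCard K (Finset.univ : Finset (Fin n))).filter
            (fun S => V ⊆ S)).card : ℝ) * ((-1:ℝ)^V.card * ∏ i ∈ Finset.univ \ V, a i) := by
    intro V
    rw [← Finset.sum_filter, Finset.sum_const, nsmul_eq_mul]
  rw [Finset.sum_congr rfl fun V _ => step3 V]
  rw [Finset.powerset_card_biUnion, Finset.sum_biUnion (by exact (Finset.pairwise_disjoint_powersetCard _).set_pairwise _)]
  rw [Finset.card_univ, Fintype.card_fin]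
  have step4 : ∀ m, m ≤ n →
      (∑ V ∈ Finset.powersetCard m (Finset.univ : Finset (Fin n)),
        (((Finset.powersetCard K (Finset.univ : Finset (Fin n))).filter
            (fun S => V ⊆ S)).card : ℝ) * ((-1:ℝ)^V.card * ∏ i ∈ Finset.univ \ V, a i))
      = if m ≤ K then (-1:ℝ)^m * ((n-m).choose (K-m) : ℝ) *
          ∑ W ∈ Finset.powersetCard (n-m) (Finset.univ : Finset (Fin n)), ∏ i ∈ W, a i
        else 0 := by
    intro m hm
    by_cases hmK : m ≤ K
    · rw [if_pos hmK]
      have : ∀ V ∈ Finset.powersetCard m (Finset.univ : Finset (Fin n)),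
          (((Finset.powersetCard K (Finset.univ : Finset (Fin n))).filter
              (fun S => V ⊆ S)).card : ℝ) * ((-1:ℝ)^V.card * ∏ i ∈ Finset.univ \ V, a i)
          = (-1:ℝ)^m * ((n-m).choose (K-m) : ℝ) * ∏ i ∈ Finset.univ \ V, a i := by
        intro V hV
        have hcard : V.card = m := (Finset.mem_powersetCard.1 hV).2
        rw [card_supersets K V (by rw [hcard]; exact hmK), hcard]
        ring
      rw [Finset.sum_congr rfl this, ← Finset.mul_sum, sum_compl_prod a m hm]
    · rw [if_neg hmK]
      refine Finset.sum_eq_zero fun V hV => ?_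
      have hcard : V.card = m := (Finset.mem_powersetCard.1 hV).2
      rw [card_supersets_zero K V (by omega)]
      simp
  have hrange : ∀ m ∈ Finset.range (n+1),
      (∑ V ∈ Finset.powersetCard m (Finset.univ : Finset (Fin n)),
        (((Finset.powersetCard K (Finset.univ : Finset (Fin n))).filter
            (fun S => V ⊆ S)).card : ℝ) * ((-1:ℝ)^V.card * ∏ i ∈ Finset.univ \ V, a i))
      = if m ≤ K then (-1:ℝ)^m * ((n-m).choose (K-m) : ℝ) *
          ∑ W ∈ Finset.powersetCard (n-m) (Finset.univ : Finset (Fin n)), ∏ i ∈ W, a i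
        else 0 := fun m hm => step4 m (by simpa using Nat.lt_succ_iff.1 (Finset.mem_range.1 hm))
  rw [Finset.sum_congr rfl hrange]
  rw [← Finset.sum_filter]
  refine Finset.sum_congr ?_ fun m _ => rfl
  ext m
  simp only [Finset.mem_filter, Finset.mem_range]
  omega

lemma two_cos_pow_complex (k : ℕ) (φ : ℝ) :
    ((2 : ℂ) * Real.cos φ) ^ (2*k)
      = ∑ j ∈ Finset.range (2*k+1), ((2*k).choose j : ℂ) *
          Complex.exp ((((2*(j:ℝ) - 2*k) * φ : ℝ)) * Complex.I) := by
  have h2c : (2 : ℂ) * Real.cos φ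
      = Complex.exp (φ * Complex.I) + Complex.exp (-φ * Complex.I) := by
    rw [Complex.ofReal_cos]; exact Complex.two_cos φ
  rw [h2c, add_pow]
  refine Finset.sum_congr rfl fun j hj => ?_
  have hj' : j ≤ 2*k := Nat.lt_succ_iff.1 (Finset.mem_range.1 hj)
  rw [← Complex.exp_nat_mul, ← Complex.exp_nat_mul, ← Complex.exp_add]
  rw [mul_comm]
  congr 1
  push_cast [hj']
  ring

lemma two_cos_pow (k : ℕ) (φ : ℝ) :
    (2 * Real.cos φ) ^ (2*k)
      = ∑ j ∈ Finset.range (2*k+1), ((2*k).choose j : ℝ) *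
          Real.cos ((2*(j:ℝ) - 2*k) * φ) := by
  have h := congrArg Complex.re (two_cos_pow_complex k φ)
  rw [show ((2:ℂ) * Real.cos φ) = ((2*Real.cos φ : ℝ) : ℂ) by push_cast; ring,
    ← Complex.ofReal_pow, Complex.ofReal_re, Complex.re_sum] at h
  rw [h]
  refine Finset.sum_congr rfl fun j hj => ?_
  rw [show ((2*k).choose j : ℂ) = (((2*k).choose j : ℝ) : ℂ) by push_cast; ring,
    Complex.re_ofReal_mul, Complex.exp_ofReal_mul_I_re]

lemma cos_sum_reflect (k : ℕ) (φ : ℝ) :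
    ∑ j ∈ Finset.range (2*k+1), ((2*k).choose j : ℝ) * Real.cos ((2*(j:ℝ) - 2*k) * φ)
      = ((2*k).choose k : ℝ) +
        2 * ∑ l ∈ Finset.Icc 1 k, ((2*k).choose (k-l) : ℝ) * Real.cos (2*l*φ) := by
  have hsplit : ∑ j ∈ Finset.range (2*k+1), ((2*k).choose j : ℝ) * Real.cos ((2*(j:ℝ) - 2*k) * φ)
      = (∑ j ∈ Finset.Ico 0 k, ((2*k).choose j : ℝ) * Real.cos ((2*(j:ℝ) - 2*k) * φ))
        + ∑ j ∈ Finset.Ico k (2*k+1), ((2*k).choose j : ℝ) * Real.cos ((2*(j:ℝ) - 2*k) * φ) := by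
    rw [Finset.range_eq_Ico, ← Finset.sum_Ico_consecutive _ (Nat.zero_le k) (by omega)]
  have hmid : ∑ j ∈ Finset.Ico k (2*k+1), ((2*k).choose j : ℝ) * Real.cos ((2*(j:ℝ) - 2*k) * φ)
      = ((2*k).choose k : ℝ) * Real.cos ((2*(k:ℝ) - 2*k) * φ)
        + ∑ j ∈ Finset.Ico (k+1) (2*k+1), ((2*k).choose j : ℝ) * Real.cos ((2*(j:ℝ) - 2*k) * φ) :=
    Finset.sum_eq_sum_Ico_succ_bot (by omega) _
  have h1 : ∑ j ∈ Finset.Ico 0 k, ((2*k).choose j : ℝ) * Real.cos ((2*(j:ℝ) - 2*k) * φ)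
      = ∑ l ∈ Finset.Icc 1 k, ((2*k).choose (k-l) : ℝ) * Real.cos (2*l*φ) := by
    refine Finset.sum_nbij' (fun j => k - j) (fun l => k - l) ?_ ?_ ?_ ?_ ?_
    · intro j hj
      simp only [Finset.mem_Ico] at hj
      simp only [Finset.mem_Icc]
      omega
    · intro l hl
      simp only [Finset.mem_Icc] at hl
      simp only [Finset.mem_Ico]
      omega
    · intro j hj; simp only [Finset.mem_Ico] at hj; omega
    · intro l hl; simp only [Finset.mem_Icc] at hl; omega
    · intro j hj
      simp only [Finset.mem_Ico] at hj
      have hjk : j ≤ k := by omega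
      have hkk : k - (k - j) = j := by omega
      rw [hkk]
      congr 1
      have : ((k - j : ℕ) : ℝ) = (k : ℝ) - j := by push_cast [hjk]; ring
      rw [show (2*(j:ℝ) - 2*k) * φ = -((2*((k - j : ℕ) : ℝ)) * φ) by rw [this]; ring,
        Real.cos_neg]
  have h2 : ∑ j ∈ Finset.Ico (k+1) (2*k+1), ((2*k).choose j : ℝ) * Real.cos ((2*(j:ℝ) - 2*k) * φ)
      = ∑ l ∈ Finset.Icc 1 k, ((2*k).choose (k-l) : ℝ) * Real.cos (2*l*φ) := by
    refine Finset.sum_nbij' (fun j => j - k) (fun l => k + l) ?_ ?_ ?_ ?_ ?_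
    · intro j hj
      simp only [Finset.mem_Ico] at hj
      simp only [Finset.mem_Icc]
      omega
    · intro l hl
      simp only [Finset.mem_Icc] at hl
      simp only [Finset.mem_Ico]
      omega
    · intro j hj; simp only [Finset.mem_Ico] at hj; omega
    · intro l hl; simp only [Finset.mem_Icc] at hl; omega
    · intro j hj
      simp only [Finset.mem_Ico] at hj
      have hchoose : (2*k).choose j = (2*k).choose (k - (j - k)) := by
        rw [← Nat.choose_symm (by omega : j ≤ 2*k)]
        congr 1
        omega
      rw [← hchoose]
      congr 1
      have : ((j - k : ℕ) : ℝ) = (j : ℝ) - k := by push_cast [show k ≤ j by omega]; ring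
      rw [this]
      ring_nf
  rw [hsplit, hmid, h1, h2]
  have : Real.cos ((2*(k:ℝ) - 2*k) * φ) = 1 := by norm_num
  rw [this]
  ring

lemma fact_ratio (n k l : ℕ) (hl : l ≤ k) (hk : 2*k ≤ n) :
    (n.factorial : ℝ) / ((n - 2*k).factorial * (k-l).factorial * (k+l).factorial)
      = (n.choose (2*k) : ℝ) * ((2*k).choose (k-l) : ℝ) := by
  have h1 : n.choose (2*k) * (2*k).factorial * (n - 2*k).factorial = n.factorial :=
    Nat.choose_mul_factorial_mul_factorial hk
  have h2 : (2*k).choose (k-l) * (k-l).factorial * (2*k - (k-l)).factorial = (2*k).factorial :=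
    Nat.choose_mul_factorial_mul_factorial (by omega)
  have h3 : 2*k - (k-l) = k+l := by omega
  rw [h3] at h2
  have hmain : (n.factorial : ℝ) = (n.choose (2*k) : ℝ) * ((2*k).choose (k-l) : ℝ)
      * (((n - 2*k).factorial : ℝ) * ((k-l).factorial : ℝ) * ((k+l).factorial : ℝ)) := by
    rw [← h1, ← h2]
    push_cast
    ring
  have hne : ((n - 2*k).factorial : ℝ) * ((k-l).factorial : ℝ) * ((k+l).factorial : ℝ) ≠ 0 := by
    have a1 := Nat.factorial_ne_zero (n - 2*k)
    have a2 := Nat.factorial_ne_zero (k-l)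
    have a3 := Nat.factorial_ne_zero (k+l)
    positivity
  rw [hmain, mul_div_assoc, div_self hne, mul_one]

theorem stmt_11 (n : ℕ) (hn : 1 ≤ n) (z : Fin n → ℝ) (hz : ∀ i, z i ≠ 1)
    (a : Fin n → ℝ) (ha : ∀ i, a i = 1 + 2 * z i / (z i - 1) ^ 2)
    (σ : ℕ → ℝ)
    (hσ : ∀ k, σ k = ∑ S ∈ Finset.powersetCard k (Finset.univ : Finset (Fin n)),
      ∏ i ∈ S, a i)
    (ρ : ℕ → ℝ) (hρ : ∀ k, ρ k = σ k / (n.choose k : ℝ))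
    (d : ℕ → ℝ)
    (hd : ∀ l, d l = 4 * ∑ k ∈ Finset.Icc l (n / 2),
      ((2 : ℝ) ^ (2 * k))⁻¹ *
        ((n.factorial : ℝ) /
          ((n - 2 * k).factorial * (k - l).factorial * (k + l).factorial)) *
        ∑ m ∈ Finset.range (2 * k + 1),
          (-1 : ℝ) ^ m * ((2 * k).choose m : ℝ) * ρ (n - m)) :
    (∀ φ : ℝ, T z φ = d 0 / 2 +
        ∑ l ∈ Finset.Icc 1 (n / 2), d l * Real.cos (2 * l * φ)) ∧
      ((∀ k ≤ n / 2,
          0 ≤ ∑ m ∈ Finset.range (2 * k + 1),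
            (-1 : ℝ) ^ m * ((2 * k).choose m : ℝ) * ρ (n - m)) →
        ∀ l ≤ n / 2, 0 ≤ d l) := by
  classical
  set Sq : ℕ → ℝ := fun k => ∑ m ∈ Finset.range (2 * k + 1),
      (-1 : ℝ) ^ m * ((2 * k).choose m : ℝ) * ρ (n - m) with hSq
  set F : ℕ → ℝ := fun k => ((2:ℝ)^(2*k))⁻¹ * (n.choose (2*k) : ℝ) * Sq k with hF
  -- Step B : identify the symmetric-function sum
  have hQ : ∀ k, k ≤ n/2 →
      (∑ S ∈ Finset.powersetCard (2*k) (Finset.univ : Finset (Fin n)),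
        (∏ i ∈ S, (a i - 1)) * ∏ i ∈ Finset.univ \ S, a i)
      = (n.choose (2*k) : ℝ) * Sq k := by
    intro k hk
    have h2k : 2*k ≤ n := by omega
    rw [QK a (2*k) h2k, hSq, Finset.mul_sum]
    refine Finset.sum_congr rfl fun m hm => ?_
    have hm' : m ≤ 2*k := Nat.lt_succ_iff.1 (Finset.mem_range.1 hm)
    rw [← hσ (n - m)]
    have hcne : (n.choose (n-m) : ℝ) ≠ 0 := by
      have := Nat.choose_pos (Nat.sub_le n m)
      exact_mod_cast this.ne'
    have hσρ : σ (n-m) = (n.choose (n-m) : ℝ) * ρ (n-m) := by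
      rw [hρ (n-m)]
      field_simp
    have hnat : (n-m).choose (2*k-m) * n.choose (n-m) = n.choose (2*k) * (2*k).choose m := by
      rw [Nat.choose_symm (show m ≤ n by omega)]
      rw [Nat.choose_mul hm']
      ring
    have hcast : ((n-m).choose (2*k-m) : ℝ) * (n.choose (n-m) : ℝ)
        = (n.choose (2*k) : ℝ) * ((2*k).choose m : ℝ) := by exact_mod_cast hnat
    rw [hσρ]
    linear_combination ((-1:ℝ)^m * ρ (n-m)) * hcast
  -- Step A + B : expansion of T
  have hT : ∀ φ : ℝ, T z φ = 2 * ∑ k ∈ Finset.range (n/2+1),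
      (Real.cos φ)^(2*k) * ((n.choose (2*k) : ℝ) * Sq k) := by
    intro φ
    have h1 : (∏ i, psi (z i) (Complex.exp (φ * Complex.I)))
        = ∏ i, (a i + -((a i - 1) * Real.cos φ)) :=
      Finset.prod_congr rfl fun i _ => by rw [psi_exp (z i) (hz i) φ, ha i]; ring
    have h2 : (∏ i, psi (z i) (-Complex.exp (φ * Complex.I)))
        = ∏ i, (a i + (a i - 1) * Real.cos φ) :=
      Finset.prod_congr rfl fun i _ => by rw [psi_neg_exp (z i) (hz i) φ, ha i]; ring
    unfold T
    rw [h1, h2, prod_expand a (fun i => a i - 1) (Real.cos φ)]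
    congr 1
    refine Finset.sum_congr rfl fun k hk => ?_
    rw [hQ k (Nat.lt_succ_iff.1 (Finset.mem_range.1 hk))]
  -- Step C : cosine power expansion
  have hcos : ∀ (φ : ℝ) (k : ℕ), (Real.cos φ)^(2*k)
      = ((2:ℝ)^(2*k))⁻¹ * (((2*k).choose k : ℝ) +
          2 * ∑ l ∈ Finset.Icc 1 k, ((2*k).choose (k-l) : ℝ) * Real.cos (2*l*φ)) := by
    intro φ k
    have h := two_cos_pow k φ
    rw [cos_sum_reflect k φ] at h
    have h2 : (2 * Real.cos φ)^(2*k) = 2^(2*k) * (Real.cos φ)^(2*k) := by rw [mul_pow]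
    rw [h2] at h
    have h2ne : ((2:ℝ)^(2*k)) ≠ 0 := by positivity
    field_simp
    linarith [h]
  constructor
  · -- main identity
    intro φ
    have e3 : T z φ = (∑ k ∈ Finset.range (n/2+1), 2 * F k * ((2*k).choose k : ℝ))
        + ∑ k ∈ Finset.range (n/2+1), ∑ l ∈ Finset.Icc 1 k,
            (4 * F k * ((2*k).choose (k-l) : ℝ)) * Real.cos (2*l*φ) := by
      rw [hT φ, Finset.mul_sum, ← Finset.sum_add_distrib]
      refine Finset.sum_congr rfl fun k hk => ?_
      have hsum : ∑ l ∈ Finset.Icc 1 k, (4 * F k * ((2*k).choose (k-l) : ℝ)) * Real.cos (2*l*φ)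
          = 4 * F k * ∑ l ∈ Finset.Icc 1 k, ((2*k).choose (k-l) : ℝ) * Real.cos (2*l*φ) := by
        rw [Finset.mul_sum]
        exact Finset.sum_congr rfl fun l _ => by ring
      rw [hsum, hcos φ k]
      simp only [hF]
      ring
    have hc0 : (∑ k ∈ Finset.range (n/2+1), 2 * F k * ((2*k).choose k : ℝ)) = d 0 / 2 := by
      rw [hd 0]
      rw [show Finset.Icc 0 (n/2) = Finset.range (n/2+1) by
        ext x; simp only [Finset.mem_Icc, Finset.mem_range]; omega]
      rw [Finset.mul_sum, Finset.sum_div]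
      refine Finset.sum_congr rfl fun k hk => ?_
      have h2k : 2*k ≤ n := by
        have := Nat.lt_succ_iff.1 (Finset.mem_range.1 hk); omega
      have hfr := fact_ratio n k 0 (Nat.zero_le k) h2k
      simp only [Nat.sub_zero, Nat.add_zero] at hfr ⊢
      rw [hfr]
      simp only [hF, hSq]
      ring
    have hswap : ∀ (k l : ℕ), k ∈ Finset.range (n/2+1) ∧ l ∈ Finset.Icc 1 k
        ↔ k ∈ Finset.Icc l (n/2) ∧ l ∈ Finset.Icc 1 (n/2) := by
      intro k l
      simp only [Finset.mem_range, Finset.mem_Icc]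
      omega
    have hccos : (∑ k ∈ Finset.range (n/2+1), ∑ l ∈ Finset.Icc 1 k,
            (4 * F k * ((2*k).choose (k-l) : ℝ)) * Real.cos (2*l*φ))
        = ∑ l ∈ Finset.Icc 1 (n/2), d l * Real.cos (2*l*φ) := by
      rw [Finset.sum_comm' hswap]
      refine Finset.sum_congr rfl fun l hl => ?_
      rw [hd l, Finset.mul_sum, Finset.sum_mul]
      refine Finset.sum_congr rfl fun k hk => ?_
      obtain ⟨hlk, hkn⟩ := Finset.mem_Icc.1 hk
      have h2k : 2*k ≤ n := by omega
      rw [fact_ratio n k l hlk h2k]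
      simp only [hF, hSq]
      ring
    rw [e3, hc0, hccos]
  · -- nonnegativity
    intro hpos l hl
    rw [hd l]
    refine mul_nonneg (by norm_num) (Finset.sum_nonneg fun k hk => ?_)
    obtain ⟨hlk, hkn⟩ := Finset.mem_Icc.1 hk
    refine mul_nonneg (mul_nonneg ?_ ?_) (hpos k hkn)
    · positivity
    · positivity
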